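/- arXiv:1910.01677 — 3 statements merged into one kernel-verified Lean document; each statement's English description precedes it below -/
import Mathlib

section
/- Let F be a finite set of nonzero ℝ-linear functionals on ℝ^n and let c ∈ ℝ^n. Define a relation R on ℝ^n by: b R b′ iff either (i) sgn(f(b)) = sgn(f(b′)) for all f ∈ F (same face), or (ii) for every f ∈ F, sgn(f(b)) = 0 or sgn(f(b)) = sgn(f(b′)), and moreover {f ∈ F : f(b) = 0 and f(c) = 0} = {f ∈ F : f(b′) = 0 and f(c) = 0}. Then two points b₁, b₂ ∈ ℝ^n are related by the equivalence relation generated by R if and only if sgn(f(b₁)) = sgn(f(b₂)) for every f ∈ F with f(c) = 0. -/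
open Filter Topology

namespace BZStratumAux

variable {n : ℕ}

/-- The relation from the theorem statement. -/
private def Rel (F : Set ((Fin n → ℝ) →ₗ[ℝ] ℝ)) (c : Fin n → ℝ) (b b' : Fin n → ℝ) : Prop :=
  (∀ f ∈ F, SignType.sign (f b) = SignType.sign (f b')) ∨
  ((∀ f ∈ F, SignType.sign (f b) = 0 ∨ SignType.sign (f b) = SignType.sign (f b')) ∧
    {f ∈ F | f b = 0 ∧ f c = 0} = {f ∈ F | f b' = 0 ∧ f c = 0})

private lemma ratio_pos {x y : ℝ} (hx : x ≠ 0) (hy : y ≠ 0)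
    (h : SignType.sign x ≠ SignType.sign y) : 0 < -x / y := by
  rcases hx.lt_or_gt with hx' | hx' <;> rcases hy.lt_or_gt with hy' | hy'
  · exact absurd (by rw [sign_neg hx', sign_neg hy']) h
  · exact div_pos (by linarith) hy'
  · rw [div_pos_iff]
    exact Or.inr ⟨by linarith, hy'⟩
  · exact absurd (by rw [sign_pos hx', sign_pos hy']) h

/-- Small perturbation step: `b` is related to a nearby point `b + t • c` whose
sign vector opens up the zeros of `b` in direction `c`. -/
private lemma step (F : Set ((Fin n → ℝ) →ₗ[ℝ] ℝ)) (hFfin : F.Finite) (c b : Fin n → ℝ) :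
    ∃ b', Rel F c b b' ∧ ∀ f ∈ F, SignType.sign (f b') =
      if f b = 0 then SignType.sign (f c) else SignType.sign (f b) := by
  have hval : ∀ (f : (Fin n → ℝ) →ₗ[ℝ] ℝ) (t : ℝ), f (b + t • c) = f b + t * f c := by
    intro f t; simp [map_add, map_smul, smul_eq_mul]
  have hev : ∀ f ∈ F, ∀ᶠ t : ℝ in 𝓝[>] 0, SignType.sign (f (b + t • c)) =
      if f b = 0 then SignType.sign (f c) else SignType.sign (f b) := by
    intro f _
    by_cases h0 : f b = 0
    · filter_upwards [self_mem_nhdsWithin] with t ht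
      simp only [Set.mem_Ioi] at ht
      rw [if_pos h0, hval, h0, zero_add, sign_mul, sign_pos ht, one_mul]
    · have htend : Tendsto (fun t : ℝ => f b + t * f c) (𝓝[>] 0) (𝓝 (f b)) := by
        have hcont : Continuous fun t : ℝ => f b + t * f c := by continuity
        have h1 := hcont.tendsto 0
        simp only [zero_mul, add_zero] at h1
        exact h1.mono_left nhdsWithin_le_nhds
      rcases lt_or_gt_of_ne h0 with hneg | hpos
      · filter_upwards [htend.eventually (eventually_lt_nhds hneg)] with t ht
        rw [hval, if_neg h0, sign_neg ht, sign_neg hneg]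
      · filter_upwards [htend.eventually (eventually_gt_nhds hpos)] with t ht
        rw [hval, if_neg h0, sign_pos ht, sign_pos hpos]
  have hall : ∀ᶠ t : ℝ in 𝓝[>] 0, (0 < t ∧ ∀ f ∈ F, SignType.sign (f (b + t • c)) =
      if f b = 0 then SignType.sign (f c) else SignType.sign (f b)) := by
    filter_upwards [self_mem_nhdsWithin, (hFfin.eventually_all).2 hev] with t ht h2
    exact ⟨ht, h2⟩
  obtain ⟨t, -, hsign⟩ := hall.exists
  refine ⟨b + t • c, Or.inr ⟨?_, ?_⟩, hsign⟩
  · intro f hf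
    by_cases h0 : f b = 0
    · exact Or.inl (sign_eq_zero_iff.2 h0)
    · exact Or.inr (by rw [hsign f hf, if_neg h0])
  · ext f
    simp only [Set.mem_setOf_eq, hval]
    constructor
    · rintro ⟨hf, hb0, hc0⟩
      exact ⟨hf, by rw [hc0, mul_zero, add_zero]; exact hb0, hc0⟩
    · rintro ⟨hf, hb0, hc0⟩
      rw [hc0, mul_zero, add_zero] at hb0
      exact ⟨hf, hb0, hc0⟩

/-- Crossing step: if some wall separates `b` from the cone direction of `c`,
there is a point `m` on the first wall that is related downward to `b`. -/
private lemma cross (F : Set ((Fin n → ℝ) →ₗ[ℝ] ℝ)) (hFfin : F.Finite) (c b : Fin n → ℝ)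
    (hb : ∀ f ∈ F, f c ≠ 0 → f b ≠ 0)
    (f₁ : (Fin n → ℝ) →ₗ[ℝ] ℝ) (hf₁ : f₁ ∈ F) (hc₁ : f₁ c ≠ 0)
    (hs₁ : SignType.sign (f₁ b) ≠ SignType.sign (f₁ c)) :
    ∃ m, Rel F c m b ∧ (∀ f ∈ F, f c = 0 → f m = f b) ∧
      (∀ f ∈ F, f c ≠ 0 → f m ≠ 0 → SignType.sign (f m) = SignType.sign (f b)) ∧
      (∃ f₀ ∈ F, f₀ c ≠ 0 ∧ f₀ m = 0 ∧
        SignType.sign (f₀ b) ≠ SignType.sign (f₀ c)) := by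
  classical
  set D : Finset ((Fin n → ℝ) →ₗ[ℝ] ℝ) :=
    hFfin.toFinset.filter
      (fun f => f c ≠ 0 ∧ SignType.sign (f b) ≠ SignType.sign (f c)) with hD
  have hf₁D : f₁ ∈ D := by
    simp only [hD, Finset.mem_filter, Set.Finite.mem_toFinset]
    exact ⟨hf₁, hc₁, hs₁⟩
  have hDim : (D.image (fun f => -f b / f c)).Nonempty :=
    ⟨_, Finset.mem_image_of_mem _ hf₁D⟩
  set T : ℝ := (D.image (fun f => -f b / f c)).min' hDim with hT
  have hTle : ∀ f ∈ D, T ≤ -f b / f c := fun f hf =>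
    Finset.min'_le _ _ (Finset.mem_image_of_mem _ hf)
  obtain ⟨f₀, hf₀D, hf₀T⟩ := Finset.mem_image.1 (Finset.min'_mem _ hDim)
  rw [← hT] at hf₀T
  have hf₀prop : f₀ ∈ F ∧ f₀ c ≠ 0 ∧ SignType.sign (f₀ b) ≠ SignType.sign (f₀ c) := by
    simpa only [hD, Finset.mem_filter, Set.Finite.mem_toFinset] using hf₀D
  have hTpos : 0 < T := by
    rw [← hf₀T]
    exact ratio_pos (hb f₀ hf₀prop.1 hf₀prop.2.1) hf₀prop.2.1 hf₀prop.2.2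
  have hval : ∀ f : (Fin n → ℝ) →ₗ[ℝ] ℝ, f (b + T • c) = f b + T * f c := by
    intro f; simp [map_add, map_smul, smul_eq_mul]
  refine ⟨b + T • c, ?_, ?_, ?_, ?_⟩
  case refine_2 =>
    intro f _ hc0; rw [hval, hc0, mul_zero, add_zero]
  case refine_3 =>
    intro f hf hc0 hm0
    rw [hval] at hm0 ⊢
    have hb0 : f b ≠ 0 := hb f hf hc0
    by_cases hfD : SignType.sign (f b) = SignType.sign (f c)
    · -- same side: no crossing ever for positive T
      rcases lt_or_gt_of_ne hb0 with hbneg | hbpos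
      · have hcneg : f c < 0 := by
          rcases lt_or_gt_of_ne hc0 with h | h
          · exact h
          · rw [sign_neg hbneg, sign_pos h] at hfD; exact absurd hfD (by decide)
        rw [sign_neg hbneg, sign_neg (by nlinarith : f b + T * f c < 0)]
      · have hcpos : 0 < f c := by
          rcases lt_or_gt_of_ne hc0 with h | h
          · rw [sign_pos hbpos, sign_neg h] at hfD; exact absurd hfD (by decide)
          · exact h
        rw [sign_pos hbpos, sign_pos (by nlinarith : 0 < f b + T * f c)]
    · -- opposite side: T ≤ first crossing time
      have hfD' : f ∈ D := by
        simp only [hD, Finset.mem_filter, Set.Finite.mem_toFinset]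
        exact ⟨hf, hc0, hfD⟩
      have hle := hTle f hfD'
      rcases lt_or_gt_of_ne hb0 with hbneg | hbpos
      · have hcpos : 0 < f c := by
          rcases lt_or_gt_of_ne hc0 with h | h
          · rw [sign_neg hbneg, sign_neg h] at hfD; exact absurd hfD (by simp)
          · exact h
        have : T * f c ≤ -f b := by
          rw [div_eq_mul_inv] at hle
          calc T * f c ≤ (-f b * (f c)⁻¹) * f c := by
                exact mul_le_mul_of_nonneg_right hle (le_of_lt hcpos)
            _ = -f b := by field_simp
        have hlt : f b + T * f c < 0 := lt_of_le_of_ne (by linarith) hm0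
        rw [sign_neg hbneg, sign_neg hlt]
      · have hcneg : f c < 0 := by
          rcases lt_or_gt_of_ne hc0 with h | h
          · exact h
          · rw [sign_pos hbpos, sign_pos h] at hfD; exact absurd hfD (by simp)
        have : -f b ≤ T * f c := by
          have h2 : -f b / f c * f c ≤ T * f c :=
            mul_le_mul_of_nonpos_right hle (le_of_lt hcneg)
          rwa [div_mul_cancel₀ _ hc0] at h2
        have hlt : 0 < f b + T * f c := lt_of_le_of_ne (by linarith) (Ne.symm hm0)
        rw [sign_pos hbpos, sign_pos hlt]
  case refine_4 =>
    refine ⟨f₀, hf₀prop.1, hf₀prop.2.1, ?_, hf₀prop.2.2⟩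
    rw [hval, ← hf₀T, div_mul_cancel₀ _ hf₀prop.2.1]
    ring
  case refine_1 =>
    refine Or.inr ⟨?_, ?_⟩
    · intro f hf
      by_cases hm0 : f (b + T • c) = 0
      · exact Or.inl (sign_eq_zero_iff.2 hm0)
      · by_cases hc0 : f c = 0
        · refine Or.inr ?_
          rw [hval, hc0, mul_zero, add_zero]
        · -- reuse the computation from refine_3
          refine Or.inr ?_
          rw [hval] at hm0
          have hb0 : f b ≠ 0 := hb f hf hc0
          by_cases hfD : SignType.sign (f b) = SignType.sign (f c)
          · rcases lt_or_gt_of_ne hb0 with hbneg | hbpos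
            · have hcneg : f c < 0 := by
                rcases lt_or_gt_of_ne hc0 with h | h
                · exact h
                · rw [sign_neg hbneg, sign_pos h] at hfD; exact absurd hfD (by decide)
              rw [hval, sign_neg (by nlinarith : f b + T * f c < 0), sign_neg hbneg]
            · have hcpos : 0 < f c := by
                rcases lt_or_gt_of_ne hc0 with h | h
                · rw [sign_pos hbpos, sign_neg h] at hfD; exact absurd hfD (by decide)
                · exact h
              rw [hval, sign_pos (by nlinarith : 0 < f b + T * f c), sign_pos hbpos]
          · have hfD' : f ∈ D := by
              simp only [hD, Finset.mem_filter, Set.Finite.mem_toFinset]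
              exact ⟨hf, hc0, hfD⟩
            have hle := hTle f hfD'
            rcases lt_or_gt_of_ne hb0 with hbneg | hbpos
            · have hcpos : 0 < f c := by
                rcases lt_or_gt_of_ne hc0 with h | h
                · rw [sign_neg hbneg, sign_neg h] at hfD; exact absurd hfD (by simp)
                · exact h
              have : T * f c ≤ -f b := by
                rw [div_eq_mul_inv] at hle
                calc T * f c ≤ (-f b * (f c)⁻¹) * f c :=
                      mul_le_mul_of_nonneg_right hle (le_of_lt hcpos)
                  _ = -f b := by field_simp
              have hlt : f b + T * f c < 0 := lt_of_le_of_ne (by linarith) hm0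
              rw [hval, sign_neg hlt, sign_neg hbneg]
            · have hcneg : f c < 0 := by
                rcases lt_or_gt_of_ne hc0 with h | h
                · exact h
                · rw [sign_pos hbpos, sign_pos h] at hfD; exact absurd hfD (by simp)
              have : -f b ≤ T * f c := by
                have h2 : -f b / f c * f c ≤ T * f c :=
                  mul_le_mul_of_nonpos_right hle (le_of_lt hcneg)
                rwa [div_mul_cancel₀ _ hc0] at h2
              have hlt : 0 < f b + T * f c := lt_of_le_of_ne (by linarith) (Ne.symm hm0)
              rw [hval, sign_pos hlt, sign_pos hbpos]
    · ext f
      simp only [Set.mem_setOf_eq, hval]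
      constructor
      · rintro ⟨hf, hb0, hc0⟩
        rw [hc0, mul_zero, add_zero] at hb0
        exact ⟨hf, hb0, hc0⟩
      · rintro ⟨hf, hb0, hc0⟩
        exact ⟨hf, by rw [hc0, mul_zero, add_zero]; exact hb0, hc0⟩

/-- By a sequence of steps, any point all of whose walls through `c`-nonvanishing
functionals are avoided can be moved into the "cone" where all such functionals
agree in sign with `c`, without changing the signs of functionals vanishing at `c`. -/
private lemma toCone (F : Set ((Fin n → ℝ) →ₗ[ℝ] ℝ)) (hFfin : F.Finite) (c : Fin n → ℝ) :
    ∀ (k : ℕ) (b : Fin n → ℝ),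
      (hFfin.toFinset.filter
        (fun f => f c ≠ 0 ∧ SignType.sign (f b) ≠ SignType.sign (f c))).card ≤ k →
      (∀ f ∈ F, f c ≠ 0 → f b ≠ 0) →
      ∃ b', Relation.EqvGen (Rel F c) b b' ∧
        (∀ f ∈ F, f c ≠ 0 → SignType.sign (f b') = SignType.sign (f c)) ∧
        (∀ f ∈ F, f c = 0 → SignType.sign (f b') = SignType.sign (f b)) := by
  classical
  intro k
  induction k with
  | zero =>
    intro b hcard _
    refine ⟨b, Relation.EqvGen.refl b, ?_, fun f _ _ => rfl⟩
    intro f hf hc0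
    by_contra hne
    have : f ∈ hFfin.toFinset.filter
        (fun f => f c ≠ 0 ∧ SignType.sign (f b) ≠ SignType.sign (f c)) := by
      simp only [Finset.mem_filter, Set.Finite.mem_toFinset]
      exact ⟨hf, hc0, hne⟩
    have := Finset.card_pos.2 ⟨f, this⟩
    omega
  | succ k ih =>
    intro b hcard hb
    by_cases hD : ∀ f ∈ F, f c ≠ 0 → SignType.sign (f b) = SignType.sign (f c)
    · exact ⟨b, Relation.EqvGen.refl b, hD, fun f _ _ => rfl⟩
    · push_neg at hD
      obtain ⟨f₁, hf₁, hc₁, hs₁⟩ := hD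
      obtain ⟨m, hmb, hmc0, hmsign, f₀, hf₀, hf₀c, hf₀m, hf₀s⟩ :=
        cross F hFfin c b hb f₁ hf₁ hc₁ hs₁
      obtain ⟨m', hmm', hm'sign⟩ := step F hFfin c m
      -- signs of m' versus b
      have key : ∀ f ∈ F, f c ≠ 0 →
          (f m' ≠ 0 ∧ (f m = 0 → SignType.sign (f m') = SignType.sign (f c)) ∧
            (f m ≠ 0 → SignType.sign (f m') = SignType.sign (f b))) := by
        intro f hf hc0
        by_cases hm0 : f m = 0
        · have h1 : SignType.sign (f m') = SignType.sign (f c) := by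
            rw [hm'sign f hf, if_pos hm0]
          refine ⟨?_, fun _ => h1, fun h => absurd hm0 h⟩
          intro h0
          rw [h0, sign_zero] at h1
          exact hc0 (sign_eq_zero_iff.1 h1.symm)
        · have h1 : SignType.sign (f m') = SignType.sign (f b) := by
            rw [hm'sign f hf, if_neg hm0]
            exact hmsign f hf hc0 hm0
          refine ⟨?_, fun h => absurd h hm0, fun _ => h1⟩
          intro h0
          rw [h0, sign_zero] at h1
          exact hb f hf hc0 (sign_eq_zero_iff.1 h1.symm)
      have hm'c0 : ∀ f ∈ F, f c = 0 → SignType.sign (f m') = SignType.sign (f b) := by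
        intro f hf hc0
        rw [hm'sign f hf]
        by_cases hm0 : f m = 0
        · rw [if_pos hm0]
          have hfb : f b = 0 := by rw [← hmc0 f hf hc0]; exact hm0
          rw [hc0, hfb]
        · rw [if_neg hm0, hmc0 f hf hc0]
      -- card decreases
      have hsub : hFfin.toFinset.filter
            (fun f => f c ≠ 0 ∧ SignType.sign (f m') ≠ SignType.sign (f c)) ⊂
          hFfin.toFinset.filter
            (fun f => f c ≠ 0 ∧ SignType.sign (f b) ≠ SignType.sign (f c)) := by
        constructor
        · intro f hfmem
          simp only [Finset.mem_filter, Set.Finite.mem_toFinset] at hfmem ⊢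
          obtain ⟨hfF, hc0, hne⟩ := hfmem
          refine ⟨hfF, hc0, ?_⟩
          obtain ⟨-, h2, h3⟩ := key f hfF hc0
          by_cases hm0 : f m = 0
          · exact absurd (h2 hm0) hne
          · rw [← h3 hm0]; exact hne
        · intro hsup
          have hmem : f₀ ∈ hFfin.toFinset.filter
              (fun f => f c ≠ 0 ∧ SignType.sign (f b) ≠ SignType.sign (f c)) := by
            simp only [Finset.mem_filter, Set.Finite.mem_toFinset]
            exact ⟨hf₀, hf₀c, hf₀s⟩
          have := hsup hmem
          simp only [Finset.mem_filter, Set.Finite.mem_toFinset] at this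
          obtain ⟨-, -, hne⟩ := this
          exact hne ((key f₀ hf₀ hf₀c).2.1 hf₀m)
      have hcard' : (hFfin.toFinset.filter
          (fun f => f c ≠ 0 ∧ SignType.sign (f m') ≠ SignType.sign (f c))).card ≤ k := by
        have := Finset.card_lt_card hsub
        omega
      have hm'ne : ∀ f ∈ F, f c ≠ 0 → f m' ≠ 0 := fun f hf hc0 => (key f hf hc0).1
      obtain ⟨b', hchain, hb'1, hb'2⟩ := ih m' hcard' hm'ne
      refine ⟨b', ?_, hb'1, ?_⟩
      · exact Relation.EqvGen.trans _ _ _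
          (Relation.EqvGen.trans _ _ _
            (Relation.EqvGen.symm _ _ (Relation.EqvGen.rel _ _ hmb))
            (Relation.EqvGen.rel _ _ hmm')) hchain
      · intro f hf hc0
        rw [hb'2 f hf hc0, hm'c0 f hf hc0]

end BZStratumAux

open BZStratumAux in
/-- the equivalence relation generated by the relation
`B₁ ≤ B₂ with B₁ + iC ≡ B₂ + iC` (together with "same face") relates `b₁, b₂`
iff `sgn(f b₁) = sgn(f b₂)` for every `f ∈ F` vanishing at `c`. -/
theorem eqvGen_same_BZ_stratum (n : ℕ)
    (F : Set ((Fin n → ℝ) →ₗ[ℝ] ℝ)) (hFfin : F.Finite) (hF0 : ∀ f ∈ F, f ≠ 0)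
    (c : Fin n → ℝ) :
    ∀ b₁ b₂ : Fin n → ℝ,
      Relation.EqvGen
        (fun b b' : Fin n → ℝ =>
          (∀ f ∈ F, SignType.sign (f b) = SignType.sign (f b')) ∨
          ((∀ f ∈ F, SignType.sign (f b) = 0 ∨ SignType.sign (f b) = SignType.sign (f b')) ∧
            {f ∈ F | f b = 0 ∧ f c = 0} = {f ∈ F | f b' = 0 ∧ f c = 0}))
        b₁ b₂ ↔
      ∀ f ∈ F, f c = 0 → SignType.sign (f b₁) = SignType.sign (f b₂) := by
  intro b₁ b₂
  constructor
  · -- forward: induction on EqvGen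
    intro h
    induction h with
    | rel x y hxy =>
      intro f hf hc0
      rcases hxy with h | ⟨h1, h2⟩
      · exact h f hf
      · rcases h1 f hf with h0 | hs
        · have hx0 : f x = 0 := sign_eq_zero_iff.1 h0
          have : f ∈ {f ∈ F | f y = 0 ∧ f c = 0} := h2 ▸ ⟨hf, hx0, hc0⟩
          rw [h0, sign_eq_zero_iff.2 this.2.1]
        · exact hs
    | refl x => intro f hf hc0; rfl
    | symm x y _ ih => intro f hf hc0; exact (ih f hf hc0).symm
    | trans x y z _ _ ih₁ ih₂ => intro f hf hc0; exact (ih₁ f hf hc0).trans (ih₂ f hf hc0)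
  · -- backward
    intro h
    show Relation.EqvGen (Rel F c) b₁ b₂
    -- move b₁ and b₂ off all walls with f c ≠ 0
    obtain ⟨p₁, hp₁rel, hp₁sign⟩ := step F hFfin c b₁
    obtain ⟨p₂, hp₂rel, hp₂sign⟩ := step F hFfin c b₂
    have hp₁ne : ∀ f ∈ F, f c ≠ 0 → f p₁ ≠ 0 := by
      intro f hf hc0 h0
      have := hp₁sign f hf
      rw [sign_eq_zero_iff.2 h0] at this
      by_cases hb0 : f b₁ = 0
      · rw [if_pos hb0] at this; exact hc0 (sign_eq_zero_iff.1 this.symm)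
      · rw [if_neg hb0] at this; exact hb0 (sign_eq_zero_iff.1 this.symm)
    have hp₂ne : ∀ f ∈ F, f c ≠ 0 → f p₂ ≠ 0 := by
      intro f hf hc0 h0
      have := hp₂sign f hf
      rw [sign_eq_zero_iff.2 h0] at this
      by_cases hb0 : f b₂ = 0
      · rw [if_pos hb0] at this; exact hc0 (sign_eq_zero_iff.1 this.symm)
      · rw [if_neg hb0] at this; exact hb0 (sign_eq_zero_iff.1 this.symm)
    have hp₁c0 : ∀ f ∈ F, f c = 0 → SignType.sign (f p₁) = SignType.sign (f b₁) := by
      intro f hf hc0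
      rw [hp₁sign f hf]
      by_cases hb0 : f b₁ = 0
      · rw [if_pos hb0, sign_eq_zero_iff.2 hc0, hb0, sign_zero]
      · rw [if_neg hb0]
    have hp₂c0 : ∀ f ∈ F, f c = 0 → SignType.sign (f p₂) = SignType.sign (f b₂) := by
      intro f hf hc0
      rw [hp₂sign f hf]
      by_cases hb0 : f b₂ = 0
      · rw [if_pos hb0, sign_eq_zero_iff.2 hc0, hb0, sign_zero]
      · rw [if_neg hb0]
    obtain ⟨q₁, hq₁chain, hq₁1, hq₁2⟩ := toCone F hFfin c _ p₁ le_rfl hp₁ne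
    obtain ⟨q₂, hq₂chain, hq₂1, hq₂2⟩ := toCone F hFfin c _ p₂ le_rfl hp₂ne
    have hq : Rel F c q₁ q₂ := by
      refine Or.inl ?_
      intro f hf
      by_cases hc0 : f c = 0
      · rw [hq₁2 f hf hc0, hq₂2 f hf hc0, hp₁c0 f hf hc0, hp₂c0 f hf hc0]
        exact h f hf hc0
      · rw [hq₁1 f hf hc0, hq₂1 f hf hc0]
    exact Relation.EqvGen.trans _ _ _
      (Relation.EqvGen.trans _ _ _ (Relation.EqvGen.rel _ _ hp₁rel) hq₁chain)
      (Relation.EqvGen.trans _ _ _ (Relation.EqvGen.rel _ _ hq)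
        (Relation.EqvGen.trans _ _ _ (Relation.EqvGen.symm _ _ hq₂chain)
          (Relation.EqvGen.symm _ _ (Relation.EqvGen.rel _ _ hp₂rel))))
end

section
/- Let F be a finite set of ℝ-linear functionals on ℝ^n and let a, b ∈ ℝ^n. Then there exists ε₀ > 0 such that for all ε with 0 < ε < ε₀ and all f ∈ F: sgn(f((1−ε)b + εa)) = sgn(f(b)) if sgn(f(b)) ≠ 0, and sgn(f((1−ε)b + εa)) = sgn(f(a)) if sgn(f(b)) = 0. In particular, all points (1−ε)b + εa for 0 < ε < ε₀ lie in a single face, which depends only on the faces of b and a; this face is the Tits product B ∘ A of the face B of b and the face A of a. -/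
private lemma sign_add_of_abs_lt {x y : ℝ} (h : |y| < |x|) :
    SignType.sign (x + y) = SignType.sign x := by
  rcases lt_trichotomy x 0 with hx | hx | hx
  · rw [sign_neg hx, sign_neg]
    have := abs_lt.mp h
    have : y < -x := by simpa [abs_of_neg hx] using this.2
    linarith
  · simp [hx] at h; exact absurd h (by simp [abs_nonneg])
  · rw [sign_pos hx, sign_pos]
    have := abs_lt.mp h
    have : -x < y := by simpa [abs_of_pos hx] using this.1
    linarith

private lemma key_one (n : ℕ) (f : (Fin n → ℝ) →ₗ[ℝ] ℝ) (a b : Fin n → ℝ) :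
    ∃ ε₀ > (0 : ℝ), ∀ ε : ℝ, 0 < ε → ε < ε₀ →
      (SignType.sign (f b) ≠ 0 →
        SignType.sign (f ((1 - ε) • b + ε • a)) = SignType.sign (f b)) ∧
      (SignType.sign (f b) = 0 →
        SignType.sign (f ((1 - ε) • b + ε • a)) = SignType.sign (f a)) := by
  have hval : ∀ ε : ℝ, f ((1 - ε) • b + ε • a) = (1 - ε) * f b + ε * f a := by
    intro ε; simp [map_add, map_smul, smul_eq_mul]
  by_cases hb : f b = 0
  · refine ⟨1, one_pos, fun ε hε _ => ?_⟩
    have hv : f ((1 - ε) • b + ε • a) = ε * f a := by rw [hval]; rw [hb]; ring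
    constructor
    · intro h; simp [hb] at h
    · intro _
      rw [hv, sign_mul, sign_pos hε, one_mul]
  · refine ⟨|f b| / (|f a - f b| + 1), by positivity, fun ε hε hε' => ?_⟩
    have hsb : SignType.sign (f b) ≠ 0 := by
      simpa [sign_eq_zero_iff] using hb
    have hv : f ((1 - ε) • b + ε • a) = f b + ε * (f a - f b) := by
      rw [hval]; ring
    have habs : |ε * (f a - f b)| < |f b| := by
      rw [abs_mul, abs_of_pos hε]
      calc ε * |f a - f b| ≤ ε * (|f a - f b| + 1) := by nlinarith [abs_nonneg (f a - f b)]
        _ < |f b| := by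
          rw [← lt_div_iff₀ (by positivity)] at *
          exact hε'
    refine ⟨fun _ => ?_, fun h => absurd h hsb⟩
    rw [hv]; exact sign_add_of_abs_lt habs

/-- for small `ε > 0` the point `(1−ε)b + εa` has sign vector
`f ↦ sgn(f b)` if `sgn(f b) ≠ 0` and `f ↦ sgn(f a)` if `sgn(f b) = 0`
(definition of the Tits product `B ∘ A` of faces). -/
theorem tits_product_exists (n : ℕ)
    (F : Set ((Fin n → ℝ) →ₗ[ℝ] ℝ)) (hFfin : F.Finite)
    (a b : Fin n → ℝ) :
    ∃ ε₀ > (0 : ℝ), ∀ ε : ℝ, 0 < ε → ε < ε₀ → ∀ f ∈ F,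
      (SignType.sign (f b) ≠ 0 →
        SignType.sign (f ((1 - ε) • b + ε • a)) = SignType.sign (f b)) ∧
      (SignType.sign (f b) = 0 →
        SignType.sign (f ((1 - ε) • b + ε • a)) = SignType.sign (f a)) := by
  classical
  have : ∀ s : Finset ((Fin n → ℝ) →ₗ[ℝ] ℝ),
      ∃ ε₀ > (0 : ℝ), ∀ ε : ℝ, 0 < ε → ε < ε₀ → ∀ f ∈ s,
      (SignType.sign (f b) ≠ 0 →
        SignType.sign (f ((1 - ε) • b + ε • a)) = SignType.sign (f b)) ∧
      (SignType.sign (f b) = 0 →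
        SignType.sign (f ((1 - ε) • b + ε • a)) = SignType.sign (f a)) := by
    intro s
    induction s using Finset.induction_on with
    | empty => exact ⟨1, one_pos, fun ε _ _ f hf => absurd hf (by simp)⟩
    | @insert g t hgt ih =>
      obtain ⟨ε₁, hε₁, h₁⟩ := ih
      obtain ⟨ε₂, hε₂, h₂⟩ := key_one n g a b
      refine ⟨min ε₁ ε₂, lt_min hε₁ hε₂, fun ε hε hε' f hf => ?_⟩
      rcases Finset.mem_insert.mp hf with rfl | hf
      · exact h₂ ε hε (lt_of_lt_of_le hε' (min_le_right _ _))
      · exact h₁ ε hε (lt_of_lt_of_le hε' (min_le_left _ _)) f hf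
  obtain ⟨ε₀, hε₀, h⟩ := this hFfin.toFinset
  exact ⟨ε₀, hε₀, fun ε hε hε' f hf => h ε hε hε' f (hFfin.mem_toFinset.mpr hf)⟩
end

section
/- Let k be a field and let E_{A,B}, for A, B ∈ {−, 0, +}, be nine k-vector spaces equipped with linear maps: p_A : E_{A,0} → E_{A,+} and q_A : E_{A,0} → E_{A,−} for each A ∈ {−, 0, +}, and u_B : E_{−,B} → E_{0,B} and v_B : E_{+,B} → E_{0,B} for each B ∈ {−, 0, +}. Assume the four squares commute: u_+ ∘ p_− = p_0 ∘ u_0, v_+ ∘ p_+ = p_0 ∘ v_0, u_− ∘ q_− = q_0 ∘ u_0, v_− ∘ q_+ = q_0 ∘ v_0; and assume the eight outer-rim maps p_−, p_+, q_−, q_+, u_−, u_+, v_−, v_+ are isomorphisms. Define δ_− = u_0 : E_{−,0} → E_{0,0}, δ_+ = v_0 : E_{+,0} → E_{0,0}, γ_− = p_−^{−1} ∘ u_+^{−1} ∘ p_0 : E_{0,0} → E_{−,0}, and γ_+ = q_+^{−1} ∘ v_−^{−1} ∘ q_0 : E_{0,0} → E_{+,0}. Then: γ_− ∘ δ_− =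 id on E_{−,0}, γ_+ ∘ δ_+ = id on E_{+,0}, and both γ_+ ∘ δ_− : E_{−,0} → E_{+,0} and γ_− ∘ δ_+ : E_{+,0} → E_{−,0} are isomorphisms. -/
open SignType in
/-- passage from a 3×3 matrix diagram (with invertible outer rim) to a
`Perv(ℂ,0)`-diagram `E₋ ⇄ E₀ ⇄ E₊`: with `δ₋ = u 0`, `δ₊ = v 0`,
`γ₋ = (p −)⁻¹ ∘ (u +)⁻¹ ∘ p 0` and `γ₊ = (q +)⁻¹ ∘ (v −)⁻¹ ∘ q 0`
(characterized by `hγm`, `hγp`), one has `γ₋ ∘ δ₋ = id`, `γ₊ ∘ δ₊ = id`, and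
`γ₊ ∘ δ₋`, `γ₋ ∘ δ₊` are isomorphisms. Here `E A B` for `A B : SignType` are the nine
spaces, `p/q` are the maps `∂'` towards `+`/`−` in the second index and `u/v` the maps
`∂''` from `−`/`+` to `0` in the first index. -/
theorem matrix_diagram_to_perv_C0 (k : Type*) [Field k]
    (E : SignType → SignType → Type*)
    [∀ A B, AddCommGroup (E A B)] [∀ A B, Module k (E A B)]
    (p : ∀ A : SignType, E A zero →ₗ[k] E A pos)
    (q : ∀ A : SignType, E A zero →ₗ[k] E A neg)
    (u : ∀ B : SignType, E neg B →ₗ[k] E zero B)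
    (v : ∀ B : SignType, E pos B →ₗ[k] E zero B)
    (hsq1 : (u pos).comp (p neg) = (p zero).comp (u zero))
    (hsq2 : (v pos).comp (p pos) = (p zero).comp (v zero))
    (hsq3 : (u neg).comp (q neg) = (q zero).comp (u zero))
    (hsq4 : (v neg).comp (q pos) = (q zero).comp (v zero))
    (hpm : Function.Bijective (p neg)) (hpp : Function.Bijective (p pos))
    (hqm : Function.Bijective (q neg)) (hqp : Function.Bijective (q pos))
    (hum : Function.Bijective (u neg)) (hup : Function.Bijective (u pos))
    (hvm : Function.Bijective (v neg)) (hvp : Function.Bijective (v pos))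
    (γm : E zero zero →ₗ[k] E neg zero)
    (hγm : ∀ e : E zero zero, u pos (p neg (γm e)) = p zero e)
    (γp : E zero zero →ₗ[k] E pos zero)
    (hγp : ∀ e : E zero zero, v neg (q pos (γp e)) = q zero e) :
    (∀ e : E neg zero, γm (u zero e) = e) ∧
    (∀ e : E pos zero, γp (v zero e) = e) ∧
    Function.Bijective (fun e : E neg zero => γp (u zero e)) ∧
    Function.Bijective (fun e : E pos zero => γm (v zero e)) := by
  have hs1 := fun e => LinearMap.congr_fun hsq1 e
  have hs2 := fun e => LinearMap.congr_fun hsq2 e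
  have hs3 := fun e => LinearMap.congr_fun hsq3 e
  have hs4 := fun e => LinearMap.congr_fun hsq4 e
  simp only [LinearMap.comp_apply] at hs1 hs2 hs3 hs4
  have h1 : ∀ e : E neg zero, γm (u zero e) = e := by
    intro e
    apply hpm.injective
    apply hup.injective
    rw [hγm (u zero e), hs1]
  have h2 : ∀ e : E pos zero, γp (v zero e) = e := by
    intro e
    apply hqp.injective
    apply hvm.injective
    rw [hγp (v zero e), hs4]
  refine ⟨h1, h2, ?_, ?_⟩
  · have key : (fun e : E neg zero => γp (u zero e)) =
        ⇑((LinearEquiv.ofBijective _ hqm).trans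
          (((LinearEquiv.ofBijective _ hum).trans
            (LinearEquiv.ofBijective _ hvm).symm).trans
            (LinearEquiv.ofBijective _ hqp).symm)) := by
      funext e
      apply hqp.injective
      apply hvm.injective
      rw [hγp (u zero e), ← hs3]
      show _ = (LinearEquiv.ofBijective (v neg) hvm) ((LinearEquiv.ofBijective (q pos) hqp) _)
      simp
    rw [key]
    exact (LinearEquiv.bijective _)
  · have key : (fun e : E pos zero => γm (v zero e)) =
        ⇑((LinearEquiv.ofBijective _ hpp).trans
          (((LinearEquiv.ofBijective _ hvp).trans
            (LinearEquiv.ofBijective _ hup).symm).trans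
            (LinearEquiv.ofBijective _ hpm).symm)) := by
      funext e
      apply hpm.injective
      apply hup.injective
      rw [hγm (v zero e), ← hs2]
      show _ = (LinearEquiv.ofBijective (u pos) hup) ((LinearEquiv.ofBijective (p neg) hpm) _)
      simp
    rw [key]
    exact (LinearEquiv.bijective _)
end
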